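/- If π is a noncrossing partition of the cyclically ordered set {1,…,m} arising as the trace of a partition of the vertex set of a planar graph drawn inside a disk with the m boundary vertices on the circle in this cyclic order, such that each part induces a connected subgraph, then π is noncrossing: there do not exist a < b < c < d with a, c in one part and b, d in a different part. (Special case: for a planar graph G embedded in a closed disk with vertices v₁,…,v_m on the boundary circle in cyclic order, if S and T are disjoint vertex sets each inducing a connected subgraph, then {v_a, v_c} ⊆ S and {v_b, v_d} ⊆ T is impossible for a < b < c < d.) -/

import Mathlib

open Set

lemma quot_slit {zx zy : ℂ} (hy : zy ≠ 0) (h : ‖zx - zy‖ < ‖zy‖) :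
    zx / zy ∈ Complex.slitPlane := by
  rw [Complex.mem_slitPlane_iff]
  left
  have h1 : ‖zx / zy - 1‖ < 1 := by
    rw [show zx / zy - 1 = (zx - zy) / zy by field_simp]
    rw [norm_div, div_lt_one (norm_pos_iff.mpr hy)]
    exact h
  have h2 : |(zx / zy - 1).re| ≤ ‖zx / zy - 1‖ := Complex.abs_re_le_norm _
  have h3 : (zx / zy - 1).re = (zx / zy).re - 1 := by simp
  have := abs_lt.mp (lt_of_le_of_lt h2 h1) |>.1
  linarith

/-- 1D lifting of the argument along a continuous nonvanishing function. -/
lemma exists_arg_lift (f : ℝ → ℂ) (hf : Continuous f) (h0 : ∀ t, f t ≠ 0)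
    {a b : ℝ} (hab : a ≤ b) :
    ∃ Θ : ℝ → ℝ, ContinuousOn Θ (Icc a b) ∧
      ∀ t ∈ Icc a b, f t = (‖f t‖ : ℂ) * Complex.exp ((Θ t : ℝ) * Complex.I) := by
  have hba : (0:ℝ) ≤ b - a := by linarith
  obtain ⟨t₀, ht₀, hmin⟩ := isCompact_Icc.exists_isMinOn (nonempty_Icc.mpr hab)
    ((continuous_norm.comp hf).continuousOn (s := Icc a b))
  have hmpos : 0 < ‖f t₀‖ := norm_pos_iff.mpr (h0 t₀)
  have huc := (isCompact_Icc (a := a) (b := b)).uniformContinuousOn_of_continuous hf.continuousOn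
  rw [Metric.uniformContinuousOn_iff] at huc
  obtain ⟨δ, hδpos, hδ⟩ := huc _ hmpos
  obtain ⟨n, hn⟩ := exists_nat_gt ((b - a) / δ)
  -- grid data, abstracted
  obtain ⟨N, g, hstep0, hstep, hg0, hgN, hgsucc⟩ :
      ∃ (N : ℕ) (g : ℕ → ℝ), 0 ≤ (b-a)/(N:ℝ) ∧ ((b-a)/(N:ℝ)) < δ ∧ g 0 = a ∧ g N = b ∧
        ∀ j : ℕ, g (j+1) - g j = (b-a)/(N:ℝ) := by
    refine ⟨n+1, fun j => a + j * ((b-a)/((n:ℝ)+1)), ?_, ?_, by simp, ?_, ?_⟩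
    · push_cast; positivity
    · push_cast
      rw [div_lt_iff₀ (by positivity)]
      have h4 := mul_lt_mul_of_pos_right hn hδpos
      have h3 : (b-a)/δ * δ = b - a := div_mul_cancel₀ _ (ne_of_gt hδpos)
      nlinarith
    · push_cast; field_simp; ring
    · intro j; push_cast; ring
  have hgmono : ∀ j : ℕ, g j ≤ g (j+1) := fun j => by have := hgsucc j; linarith
  have hgmem : ∀ j : ℕ, j ≤ N → g j ∈ Icc a b := by
    intro j hj
    have hle : ∀ i : ℕ, g i = a + i * ((b-a)/N) := by
      intro i
      induction i with
      | zero => simpa using hg0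
      | succ i ih => have := hgsucc i; push_cast; push_cast at ih; linarith
    rw [hle j]
    constructor
    · have : 0 ≤ (j:ℝ) * ((b-a)/N) := mul_nonneg (Nat.cast_nonneg j) hstep0
      linarith
    · have hjN : (j:ℝ) ≤ N := by exact_mod_cast hj
      have h1 : (j:ℝ) * ((b-a)/N) ≤ N * ((b-a)/N) := mul_le_mul_of_nonneg_right hjN hstep0
      have h2 : (N:ℝ) * ((b-a)/N) = b - a := by
        rcases Nat.eq_zero_or_pos N with h | h
        · have hb : b = a := by rw [← hg0, ← hgN, h]
          simp [h, hb]
        · have : (N:ℝ) ≠ 0 := by exact_mod_cast h.ne'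
          field_simp
      linarith
  set x : ℝ → ℕ → ℝ := fun t j => min t (g j) with hx
  have hxmem : ∀ t ∈ Icc a b, ∀ j, j ≤ N → x t j ∈ Icc a b := by
    intro t ht j hj
    exact ⟨le_min ht.1 (hgmem j hj).1, min_le_of_left_le ht.2⟩
  have hxclose : ∀ t : ℝ, ∀ j : ℕ, |x t (j+1) - x t j| < δ := by
    intro t j
    have h1 := hgsucc j
    have hmo := hgmono j
    have key : |x t (j+1) - x t j| ≤ (b-a)/N := by
      simp only [hx]
      rcases le_total t (g j) with h | h
      · rw [min_eq_left h, min_eq_left (h.trans hmo), sub_self, abs_zero]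
        exact hstep0
      · rw [min_eq_right h]
        rcases le_total t (g (j+1)) with h' | h'
        · rw [min_eq_left h', _root_.abs_of_nonneg (by linarith)]; linarith
        · rw [min_eq_right h', _root_.abs_of_nonneg (by linarith)]; linarith
    linarith
  set q : ℝ → ℕ → ℂ := fun t j => f (x t (j+1)) / f (x t j) with hq
  have hq' : ∀ t j, q t j = f (x t (j+1)) / f (x t j) := fun t j => rfl
  have hqslit : ∀ t ∈ Icc a b, ∀ j, j < N → q t j ∈ Complex.slitPlane := by
    intro t ht j hj
    rw [hq']
    apply quot_slit (h0 _)
    have h1 := hδ _ (hxmem t ht (j+1) hj) _ (hxmem t ht j (le_of_lt hj))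
      (by rw [Real.dist_eq]; exact hxclose t j)
    rw [Complex.dist_eq] at h1
    have h2 : ‖f t₀‖ ≤ ‖f (x t j)‖ := hmin (hxmem t ht j (le_of_lt hj))
    linarith
  refine ⟨fun t => Complex.arg (f a) + ∑ j ∈ Finset.range N, Complex.arg (q t j), ?_, ?_⟩
  · apply ContinuousOn.add continuousOn_const
    apply continuousOn_finset_sum
    intro j hj
    rw [Finset.mem_range] at hj
    intro t ht
    have hqc : ContinuousWithinAt (fun s => q s j) (Icc a b) t := by
      simp only [hq]
      apply ContinuousWithinAt.div
      · exact (hf.comp (continuous_id.min continuous_const)).continuousWithinAt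
      · exact (hf.comp (continuous_id.min continuous_const)).continuousWithinAt
      · exact h0 _
    show ContinuousWithinAt (Complex.arg ∘ fun s => q s j) (Icc a b) t
    exact ContinuousAt.comp_continuousWithinAt
      (Complex.continuousAt_arg (hqslit t ht j hj)) hqc
  · intro t ht
    have key : ∀ k, k ≤ N →
        f (x t k) = (‖f (x t k)‖ : ℂ) *
          Complex.exp (((Complex.arg (f a) + ∑ j ∈ Finset.range k, Complex.arg (q t j) : ℝ) : ℂ) * Complex.I) := by
      intro k hk
      induction k with
      | zero =>
        have hx0 : x t 0 = a := by
          simp only [hx]; rw [hg0, min_eq_right ht.1]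
        rw [hx0]
        simp only [Finset.range_zero, Finset.sum_empty, add_zero]
        exact (Complex.norm_mul_exp_arg_mul_I (f a)).symm
      | succ k ih =>
        have hk' : k ≤ N := by omega
        have ihk := ih hk'
        have hq0 : q t k ≠ 0 := by rw [hq']; exact div_ne_zero (h0 _) (h0 _)
        rw [Finset.sum_range_succ]
        have hsplit : Complex.exp (((Complex.arg (f a) + (∑ j ∈ Finset.range k, Complex.arg (q t j) + Complex.arg (q t k)) : ℝ) : ℂ) * Complex.I)
            = Complex.exp (((Complex.arg (f a) + ∑ j ∈ Finset.range k, Complex.arg (q t j) : ℝ) : ℂ) * Complex.I)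
              * Complex.exp ((Complex.arg (q t k) : ℂ) * Complex.I) := by
          rw [← Complex.exp_add]; congr 1; push_cast; ring
        have habs : (‖f (x t (k+1))‖ : ℂ) = (‖q t k‖ : ℂ) * (‖f (x t k)‖ : ℂ) := by
          rw [hq', norm_div]
          have h2 : (‖f (x t k)‖ : ℂ) ≠ 0 := by
            exact_mod_cast norm_ne_zero_iff.mpr (h0 _)
          push_cast
          field_simp
        have step1 : f (x t (k+1)) = q t k * f (x t k) := by
          rw [hq', div_mul_cancel₀ _ (h0 _)]
        conv_lhs => rw [step1, ihk]
        rw [habs, hsplit]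
        conv_lhs => rw [← Complex.norm_mul_exp_arg_mul_I (q t k)]
        ring
    have hxN : x t N = t := by
      simp only [hx]; rw [hgN, min_eq_left ht.2]
    have hfin := key N le_rfl
    rw [hxN] at hfin
    simpa using hfin


section
variable (f : ℝ → ℂ)

/-- increments of two lifts agree -/
lemma arg_lift_unique {a b : ℝ} (hab : a ≤ b) (Θ₁ Θ₂ : ℝ → ℝ)
    (h1c : ContinuousOn Θ₁ (Icc a b)) (h2c : ContinuousOn Θ₂ (Icc a b))
    (h1 : ∀ t ∈ Icc a b, f t = (‖f t‖ : ℂ) * Complex.exp ((Θ₁ t : ℝ) * Complex.I))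
    (h2 : ∀ t ∈ Icc a b, f t = (‖f t‖ : ℂ) * Complex.exp ((Θ₂ t : ℝ) * Complex.I))
    (h0 : ∀ t ∈ Icc a b, f t ≠ 0) :
    Θ₁ b - Θ₁ a = Θ₂ b - Θ₂ a := by
  set d : ℝ → ℝ := fun t => Θ₁ t - Θ₂ t with hd
  have hdval : ∀ t ∈ Icc a b, ∃ n : ℤ, d t = n * (2 * Real.pi) := by
    intro t ht
    have hane : (‖f t‖ : ℂ) ≠ 0 := by
      exact_mod_cast norm_ne_zero_iff.mpr (h0 t ht)
    have he : Complex.exp ((Θ₁ t : ℝ) * Complex.I) = Complex.exp ((Θ₂ t : ℝ) * Complex.I) := by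
      have := (h1 t ht).symm.trans (h2 t ht)
      exact mul_left_cancel₀ hane this
    have : Complex.exp (((Θ₁ t : ℝ) : ℂ) * Complex.I - ((Θ₂ t : ℝ) : ℂ) * Complex.I) = 1 := by
      rw [Complex.exp_sub, he, div_self (Complex.exp_ne_zero _)]
    rw [Complex.exp_eq_one_iff] at this
    obtain ⟨n, hn⟩ := this
    refine ⟨n, ?_⟩
    have : ((Θ₁ t - Θ₂ t : ℝ) : ℂ) * Complex.I = (n * (2 * Real.pi) : ℝ) * Complex.I := by
      push_cast
      push_cast at hn
      rw [show ((Θ₁ t :ℂ) - Θ₂ t) * Complex.I = (Θ₁ t : ℂ) * Complex.I - (Θ₂ t : ℂ)* Complex.I by ring, hn]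
      ring
    have h3 := mul_right_cancel₀ Complex.I_ne_zero this
    exact_mod_cast h3
  -- image of d is preconnected and inside 2πℤ, hence a subsingleton
  have hdc : ContinuousOn d (Icc a b) := h1c.sub h2c
  have hpre : IsPreconnected (d '' Icc a b) := (isPreconnected_Icc).image d hdc
  have hsub : ∀ z ∈ d '' Icc a b, ∃ n : ℤ, z = n * (2 * Real.pi) := by
    rintro z ⟨t, ht, rfl⟩; exact hdval t ht
  have hsingle : ∀ z w, z ∈ d '' Icc a b → w ∈ d '' Icc a b → z = w := by
    intro z w hz hw
    by_contra hne
    wlog hlt : z < w generalizing z w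
    · exact this w z hw hz (Ne.symm hne) (by cases lt_or_gt_of_ne hne with
        | inl h => exact absurd h hlt
        | inr h => exact h)
    obtain ⟨p, hp⟩ := hsub z hz
    obtain ⟨r, hr⟩ := hsub w hw
    have hpr : p < r := by
      have h2pi : (0:ℝ) < 2 * Real.pi := by positivity
      by_contra hc
      push_neg at hc
      have : (r:ℝ) ≤ p := by exact_mod_cast hc
      nlinarith
    have hwz : z + 2 * Real.pi ≤ w := by
      have : (p:ℝ) + 1 ≤ r := by exact_mod_cast hpr
      have h2pi : (0:ℝ) < 2 * Real.pi := by positivity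
      rw [hp, hr]
      nlinarith
    have hmem : z + Real.pi ∈ d '' Icc a b := by
      apply hpre.Icc_subset hz hw
      constructor
      · have : (0:ℝ) < Real.pi := Real.pi_pos
        linarith
      · have : (0:ℝ) < Real.pi := Real.pi_pos
        linarith
    obtain ⟨s, hs⟩ := hsub _ hmem
    rw [hp] at hs
    have : (2 * s : ℝ) = 2 * p + 1 := by
      have hpi : (Real.pi) ≠ 0 := Real.pi_ne_zero
      have : (s:ℝ) * (2 * Real.pi) = (p:ℝ) * (2*Real.pi) + Real.pi := by linarith
      field_simp at this
      nlinarith [Real.pi_pos]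
    have : (2 * s : ℤ) = 2 * p + 1 := by exact_mod_cast this
    omega
  have ha : d a ∈ d '' Icc a b := mem_image_of_mem d (left_mem_Icc.mpr hab)
  have hb : d b ∈ d '' Icc a b := mem_image_of_mem d (right_mem_Icc.mpr hab)
  have := hsingle _ _ ha hb
  simp only [hd] at this
  linarith

end



lemma slit_of_ne_ray {z : ℂ} (ρ : ℝ)
    (h : ∀ lam : ℝ, 0 ≤ lam → z ≠ (lam : ℂ) * Complex.exp ((ρ:ℝ) * Complex.I)) :
    z * Complex.exp (-((ρ + Real.pi : ℝ) : ℂ) * Complex.I) ∈ Complex.slitPlane := by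
  set w := z * Complex.exp (-((ρ + Real.pi : ℝ) : ℂ) * Complex.I) with hw
  rw [Complex.mem_slitPlane_iff]
  by_contra hc
  push_neg at hc
  obtain ⟨hre, him⟩ := hc
  have hwre : w = ((w.re : ℝ) : ℂ) := by
    apply Complex.ext <;> simp [him]
  have hz : z = w * Complex.exp (((ρ + Real.pi : ℝ) : ℂ) * Complex.I) := by
    have h0 : (-((ρ + Real.pi : ℝ) : ℂ)) * Complex.I + ((ρ + Real.pi : ℝ) : ℂ) * Complex.I = 0 := by
      ring
    rw [hw, mul_assoc, ← Complex.exp_add, h0, Complex.exp_zero, mul_one]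
  have hexp : Complex.exp (((ρ + Real.pi : ℝ) : ℂ) * Complex.I)
      = - Complex.exp ((ρ:ℝ) * Complex.I) := by
    push_cast
    rw [add_mul, Complex.exp_add, Complex.exp_pi_mul_I]
    ring
  apply h (-w.re) (by linarith)
  rw [hz, hexp]
  conv_lhs => rw [hwre]
  push_cast
  ring


/-- A lift of a function avoiding the ray at angle ρ has increment given by the
branch of arg with values in (ρ, ρ+2π). -/
lemma lift_inc_of_avoid (f : ℝ → ℂ) {a b ρ : ℝ} (hab : a ≤ b) (hf : Continuous f)
    (havoid : ∀ t ∈ Icc a b, ∀ lam : ℝ, 0 ≤ lam → f t ≠ (lam : ℂ) * Complex.exp ((ρ:ℝ) * Complex.I))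
    (Θ : ℝ → ℝ) (hΘc : ContinuousOn Θ (Icc a b))
    (hΘ : ∀ t ∈ Icc a b, f t = (‖f t‖ : ℂ) * Complex.exp ((Θ t : ℝ) * Complex.I)) :
    Θ b - Θ a = Complex.arg (f b * Complex.exp (-((ρ + Real.pi : ℝ) : ℂ) * Complex.I))
      - Complex.arg (f a * Complex.exp (-((ρ + Real.pi : ℝ) : ℂ) * Complex.I)) := by
  have h0 : ∀ t ∈ Icc a b, f t ≠ 0 := by
    intro t ht hzero
    exact havoid t ht 0 le_rfl (by rw [hzero]; simp)
  set w : ℝ → ℂ := fun t => f t * Complex.exp (-((ρ + Real.pi : ℝ) : ℂ) * Complex.I) with hw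
  have hwslit : ∀ t ∈ Icc a b, w t ∈ Complex.slitPlane := by
    intro t ht
    exact slit_of_ne_ray ρ (havoid t ht)
  have hw0 : ∀ t ∈ Icc a b, w t ≠ 0 := by
    intro t ht
    exact mul_ne_zero (h0 t ht) (Complex.exp_ne_zero _)
  -- B t := ρ + π + arg (w t) is a lift of f
  set B : ℝ → ℝ := fun t => ρ + Real.pi + Complex.arg (w t) with hB
  have hBc : ContinuousOn B (Icc a b) := by
    apply ContinuousOn.add continuousOn_const
    intro t ht
    show ContinuousWithinAt (Complex.arg ∘ w) (Icc a b) t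
    refine ContinuousAt.comp_continuousWithinAt
      (Complex.continuousAt_arg (hwslit t ht)) ?_
    exact ((hf.mul continuous_const).continuousWithinAt)
  have hBlift : ∀ t ∈ Icc a b, f t = (‖f t‖ : ℂ) * Complex.exp ((B t : ℝ) * Complex.I) := by
    intro t ht
    have habs : ‖w t‖ = ‖f t‖ := by
      rw [hw]
      simp only [norm_mul, Complex.norm_exp]
      have : (-((ρ + Real.pi : ℝ) : ℂ) * Complex.I).re = 0 := by simp
      rw [this, Real.exp_zero, mul_one]
    have hwt := Complex.norm_mul_exp_arg_mul_I (w t)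
    have hexpand : Complex.exp ((B t : ℝ) * Complex.I)
        = Complex.exp (((ρ + Real.pi : ℝ) : ℂ) * Complex.I) * Complex.exp ((Complex.arg (w t) : ℂ) * Complex.I) := by
      rw [← Complex.exp_add, hB]
      congr 1
      push_cast
      ring
    rw [hexpand]
    have hwt' : (‖f t‖ : ℂ) * Complex.exp ((Complex.arg (w t) : ℂ) * Complex.I) = w t := by
      rw [show ((‖f t‖ : ℝ) : ℂ) = ((‖w t‖ : ℝ) : ℂ) by rw [habs]]
      exact hwt
    calc f t = w t * Complex.exp (((ρ + Real.pi : ℝ) : ℂ) * Complex.I) := by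
          rw [hw]
          have h1 : (-((ρ + Real.pi : ℝ) : ℂ)) * Complex.I + ((ρ + Real.pi : ℝ) : ℂ) * Complex.I = 0 := by ring
          rw [mul_assoc, ← Complex.exp_add, h1, Complex.exp_zero, mul_one]
      _ = ((‖f t‖ : ℂ) * Complex.exp ((Complex.arg (w t) : ℂ) * Complex.I))
            * Complex.exp (((ρ + Real.pi : ℝ) : ℂ) * Complex.I) := by rw [hwt']
      _ = _ := by ring
  have := arg_lift_unique f hab Θ B hΘc hBc hΘ hBlift h0
  rw [this, hB]
  simp only [hw]
  ring

/-- lifts of uniformly-close loops with equal endpoint ratios have equal increments -/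
lemma lift_inc_perturb (f g : ℝ → ℂ) {a b : ℝ} (hab : a ≤ b)
    (hfc : Continuous f) (hgc : Continuous g)
    (hf0 : ∀ t ∈ Icc a b, f t ≠ 0) (hg0 : ∀ t ∈ Icc a b, g t ≠ 0)
    (hclose : ∀ t ∈ Icc a b, ‖g t - f t‖ < ‖f t‖)
    (hratio : g a / f a = g b / f b)
    (Θf Θg : ℝ → ℝ) (hΘfc : ContinuousOn Θf (Icc a b)) (hΘgc : ContinuousOn Θg (Icc a b))
    (hΘf : ∀ t ∈ Icc a b, f t = (‖f t‖ : ℂ) * Complex.exp ((Θf t : ℝ) * Complex.I))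
    (hΘg : ∀ t ∈ Icc a b, g t = (‖g t‖ : ℂ) * Complex.exp ((Θg t : ℝ) * Complex.I)) :
    Θg b - Θg a = Θf b - Θf a := by
  set q : ℝ → ℂ := fun t => g t / f t with hqdef
  have hq' : ∀ t, q t = g t / f t := fun t => rfl
  have hq0 : ∀ t ∈ Icc a b, q t ≠ 0 := fun t ht => div_ne_zero (hg0 t ht) (hf0 t ht)
  have hqslit : ∀ t ∈ Icc a b, q t ∈ Complex.slitPlane := by
    intro t ht
    exact quot_slit (hf0 t ht) (hclose t ht)
  set Θ' : ℝ → ℝ := fun t => Θf t + Complex.arg (q t) with hΘ'def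
  have hΘ'c : ContinuousOn Θ' (Icc a b) := by
    apply hΘfc.add
    intro t ht
    show ContinuousWithinAt (Complex.arg ∘ q) (Icc a b) t
    refine ContinuousAt.comp_continuousWithinAt (Complex.continuousAt_arg (hqslit t ht)) ?_
    exact (hgc.continuousWithinAt).div (hfc.continuousWithinAt) (hf0 t ht)
  have hΘ'lift : ∀ t ∈ Icc a b, g t = (‖g t‖ : ℂ) * Complex.exp ((Θ' t : ℝ) * Complex.I) := by
    intro t ht
    have e1 : (‖q t‖ : ℂ) * Complex.exp ((Complex.arg (q t) : ℂ) * Complex.I) = q t :=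
      Complex.norm_mul_exp_arg_mul_I (q t)
    have e2 : (‖f t‖ : ℂ) * Complex.exp ((Θf t : ℝ) * Complex.I) = f t := (hΘf t ht).symm
    have hgt : g t = q t * f t := by
      rw [hq', div_mul_cancel₀ _ (hf0 t ht)]
    have habs : (‖g t‖ : ℂ) = (‖q t‖ : ℂ) * (‖f t‖ : ℂ) := by
      rw [hgt]
      push_cast [norm_mul]
      ring
    have hexp : Complex.exp ((Θ' t : ℝ) * Complex.I)
        = Complex.exp ((Θf t : ℝ) * Complex.I) * Complex.exp ((Complex.arg (q t) : ℂ) * Complex.I) := by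
      rw [← Complex.exp_add, hΘ'def]
      congr 1
      push_cast
      ring
    rw [hexp, habs]
    calc g t = q t * f t := hgt
      _ = ((‖q t‖ : ℂ) * Complex.exp ((Complex.arg (q t) : ℂ) * Complex.I))
            * ((‖f t‖ : ℂ) * Complex.exp ((Θf t : ℝ) * Complex.I)) := by rw [e1, e2]
      _ = _ := by ring
  have huniq := arg_lift_unique g hab Θg Θ' hΘgc hΘ'c hΘg hΘ'lift hg0
  rw [huniq, hΘ'def]
  simp only []
  have : Complex.arg (q b) = Complex.arg (q a) := by
    rw [hq', hq', ← hratio]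
  rw [this]
  ring

/-- homotopy invariance of the lift increment for loops over `[0,4]` -/
lemma loop_inc_homotopy (A : ℝ → ℝ → ℂ)
    (hA : Continuous (fun p : ℝ × ℝ => A p.1 p.2))
    (h0 : ∀ r t, A r t ≠ 0)
    (hloop : ∀ r, A r 0 = A r 4)
    (Θ₀ Θ₁ : ℝ → ℝ)
    (hΘ₀c : ContinuousOn Θ₀ (Icc 0 4)) (hΘ₁c : ContinuousOn Θ₁ (Icc 0 4))
    (hΘ₀ : ∀ t ∈ Icc (0:ℝ) 4, A 0 t = (‖A 0 t‖ : ℂ) * Complex.exp ((Θ₀ t : ℝ) * Complex.I))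
    (hΘ₁ : ∀ t ∈ Icc (0:ℝ) 4, A 1 t = (‖A 1 t‖ : ℂ) * Complex.exp ((Θ₁ t : ℝ) * Complex.I)) :
    Θ₀ 4 - Θ₀ 0 = Θ₁ 4 - Θ₁ 0 := by
  have h04 : (0:ℝ) ≤ 4 := by norm_num
  have hArc : ∀ r : ℝ, Continuous (A r) := by
    intro r
    exact hA.comp (continuous_const.prodMk continuous_id)
  have H : ∀ r : ℝ, ∃ Θ : ℝ → ℝ, ContinuousOn Θ (Icc 0 4) ∧
      ∀ t ∈ Icc (0:ℝ) 4, A r t = (‖A r t‖ : ℂ) * Complex.exp ((Θ t : ℝ) * Complex.I) :=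
    fun r => exists_arg_lift (A r) (hArc r) (h0 r) h04
  choose Θ hΘc hΘ using H
  set W : ℝ → ℝ := fun r => Θ r 4 - Θ r 0 with hW
  -- compactness setup
  set K : Set (ℝ × ℝ) := Icc (0:ℝ) 1 ×ˢ Icc (0:ℝ) 4 with hK
  have hKc : IsCompact K := isCompact_Icc.prod isCompact_Icc
  have hKne : K.Nonempty := ⟨(0,0), by
    rw [hK]
    refine Set.mem_prod.mpr ⟨?_, ?_⟩ <;> constructor <;> norm_num⟩
  obtain ⟨p₀, hp₀, hmin⟩ := hKc.exists_isMinOn hKne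
    ((continuous_norm.comp hA).continuousOn (s := K))
  have hεpos : 0 < ‖A p₀.1 p₀.2‖ := norm_pos_iff.mpr (h0 _ _)
  have huc := hKc.uniformContinuousOn_of_continuous hA.continuousOn
  rw [Metric.uniformContinuousOn_iff] at huc
  obtain ⟨δ, hδpos, hδ⟩ := huc _ hεpos
  -- step
  have hstep : ∀ r ∈ Icc (0:ℝ) 1, ∀ r' ∈ Icc (0:ℝ) 1, |r' - r| < δ → W r' = W r := by
    intro r hr r' hr' hclose
    have hcl : ∀ t ∈ Icc (0:ℝ) 4, ‖A r' t - A r t‖ < ‖A r t‖ := by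
      intro t ht
      have hmem : (r, t) ∈ K := by
        rw [hK]; exact ⟨hr, ht⟩
      have hmem' : (r', t) ∈ K := by
        rw [hK]; exact ⟨hr', ht⟩
      have hdist : dist ((r':ℝ), t) ((r:ℝ), t) < δ := by
        rw [Prod.dist_eq]
        simp only [dist_self]
        rw [Real.dist_eq]
        exact max_lt hclose hδpos
      have h1 := hδ _ hmem' _ hmem hdist
      rw [Complex.dist_eq] at h1
      have h2 : ‖A p₀.1 p₀.2‖ ≤ ‖A r t‖ := hmin hmem
      exact lt_of_lt_of_le h1 h2
    have hratio : A r' 0 / A r 0 = A r' 4 / A r 4 := by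
      rw [hloop r, hloop r']
    exact lift_inc_perturb (A r) (A r') h04 (hArc r) (hArc r')
      (fun t _ => h0 r t) (fun t _ => h0 r' t) hcl hratio
      (Θ r) (Θ r') (hΘc r) (hΘc r') (hΘ r) (hΘ r')
  -- chain from 0 to 1
  obtain ⟨n, hn⟩ := exists_nat_gt (1/δ)
  have hnpos : 0 < (n:ℝ) + 1 := by positivity
  have hsmall : 1/((n:ℝ)+1) < δ := by
    rw [div_lt_iff₀ hnpos]
    have h2 : 1/δ < (n:ℝ)+1 := by linarith
    have h4 := mul_lt_mul_of_pos_right h2 hδpos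
    have h3 : 1/δ * δ = 1 := one_div_mul_cancel (ne_of_gt hδpos)
    nlinarith
  have hchain : ∀ k : ℕ, k ≤ n + 1 → W ((k:ℝ)/((n:ℝ)+1)) = W 0 := by
    intro k hk
    induction k with
    | zero => simp
    | succ k ih =>
      have hk' : k ≤ n + 1 := by omega
      have hmem : ∀ j : ℕ, j ≤ n + 1 → ((j:ℝ)/((n:ℝ)+1)) ∈ Icc (0:ℝ) 1 := by
        intro j hj
        constructor
        · positivity
        · rw [div_le_one hnpos]
          exact_mod_cast hj
      have hd : |((k+1:ℕ):ℝ)/((n:ℝ)+1) - (k:ℝ)/((n:ℝ)+1)| < δ := by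
        push_cast
        rw [div_sub_div_same]
        have : ((k:ℝ) + 1 - k) = 1 := by ring
        rw [this, abs_of_nonneg (by positivity)]
        exact hsmall
      have := hstep _ (hmem k hk') _ (hmem (k+1) hk) (by push_cast at hd ⊢; exact hd)
      rw [this, ih hk']
  have hW1 : W 1 = W 0 := by
    have := hchain (n+1) le_rfl
    have he : (((n+1:ℕ)):ℝ)/((n:ℝ)+1) = 1 := by
      push_cast
      field_simp
    rw [he] at this
    exact this
  have e0 : Θ₀ 4 - Θ₀ 0 = W 0 :=
    arg_lift_unique (A 0) h04 Θ₀ (Θ 0) hΘ₀c (hΘc 0) hΘ₀ (hΘ 0) (fun t _ => h0 0 t)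
  have e1 : Θ₁ 4 - Θ₁ 0 = W 1 :=
    arg_lift_unique (A 1) h04 Θ₁ (Θ 1) hΘ₁c (hΘc 1) hΘ₁ (hΘ 1) (fun t _ => h0 1 t)
  rw [e0, e1, hW1]

lemma chord_eq (x y : ℝ) :
    Complex.exp ((x:ℝ) * Complex.I) - Complex.exp ((y:ℝ) * Complex.I)
      = ((2 * Real.sin ((x-y)/2) : ℝ) : ℂ)
        * Complex.exp ((((x+y)/2 + Real.pi/2 : ℝ) : ℂ) * Complex.I) := by
  set m : ℝ := (x+y)/2 with hm
  set u : ℝ := (x-y)/2 with hu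
  have hx : ((x:ℝ) : ℂ) * Complex.I = ((m:ℝ):ℂ) * Complex.I + ((u:ℝ):ℂ) * Complex.I := by
    rw [hm, hu]; push_cast; ring
  have hy : ((y:ℝ) : ℂ) * Complex.I = ((m:ℝ):ℂ) * Complex.I + ((-u:ℝ):ℂ) * Complex.I := by
    rw [hm, hu]; push_cast; ring
  rw [hx, hy, Complex.exp_add, Complex.exp_add]
  have hsin : Complex.exp (((u:ℝ):ℂ) * Complex.I) - Complex.exp (((-u:ℝ):ℂ) * Complex.I)
      = ((2 * Real.sin u : ℝ) : ℂ) * Complex.I := by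
    rw [Complex.exp_mul_I, Complex.exp_mul_I]
    rw [← Complex.ofReal_cos, ← Complex.ofReal_sin, ← Complex.ofReal_cos, ← Complex.ofReal_sin]
    rw [Real.cos_neg, Real.sin_neg]
    push_cast
    ring
  have hpi2 : Complex.exp ((((m + Real.pi/2 : ℝ)) : ℂ) * Complex.I)
      = Complex.exp (((m:ℝ):ℂ) * Complex.I) * Complex.I := by
    have : (((m + Real.pi/2 : ℝ)) : ℂ) * Complex.I
        = ((m:ℝ):ℂ) * Complex.I + ((Real.pi/2 : ℝ):ℂ) * Complex.I := by push_cast; ring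
    rw [this, Complex.exp_add]
    congr 1
    rw [Complex.exp_mul_I, ← Complex.ofReal_cos, ← Complex.ofReal_sin]
    rw [Real.cos_pi_div_two, Real.sin_pi_div_two]
    push_cast
    ring
  calc Complex.exp (((m:ℝ):ℂ) * Complex.I) * Complex.exp (((u:ℝ):ℂ) * Complex.I)
        - Complex.exp (((m:ℝ):ℂ) * Complex.I) * Complex.exp (((-u:ℝ):ℂ) * Complex.I)
      = Complex.exp (((m:ℝ):ℂ) * Complex.I)
          * (Complex.exp (((u:ℝ):ℂ) * Complex.I) - Complex.exp (((-u:ℝ):ℂ) * Complex.I)) := by ring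
    _ = Complex.exp (((m:ℝ):ℂ) * Complex.I) * (((2 * Real.sin u : ℝ) : ℂ) * Complex.I) := by rw [hsin]
    _ = _ := by rw [hpi2]; ring

lemma arg_exp_real {φ : ℝ} (h1 : -Real.pi < φ) (h2 : φ ≤ Real.pi) :
    Complex.arg (Complex.exp ((φ:ℝ) * Complex.I)) = φ := by
  rw [Complex.exp_mul_I]
  exact Complex.arg_cos_add_sin_mul_I ⟨h1, h2⟩

lemma arg_chord_rot (x y ρ' : ℝ) (hd1 : 0 < (x - y)/2) (hd2 : (x-y)/2 < Real.pi)
    (k : ℤ) (hk1 : -Real.pi < (x+y)/2 + Real.pi/2 - ρ' + 2*Real.pi*k)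
    (hk2 : (x+y)/2 + Real.pi/2 - ρ' + 2*Real.pi*k ≤ Real.pi) :
    Complex.arg ((Complex.exp ((x:ℝ) * Complex.I) - Complex.exp ((y:ℝ) * Complex.I))
        * Complex.exp (-((ρ':ℝ):ℂ) * Complex.I))
      = (x+y)/2 + Real.pi/2 - ρ' + 2*Real.pi*k := by
  rw [chord_eq]
  set φ : ℝ := (x+y)/2 + Real.pi/2 - ρ' + 2*Real.pi*k with hφ
  have hrot : Complex.exp ((((x+y)/2 + Real.pi/2 : ℝ) : ℂ) * Complex.I)
      * Complex.exp (-((ρ':ℝ):ℂ) * Complex.I) = Complex.exp ((φ:ℝ) * Complex.I) := by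
    rw [← Complex.exp_add]
    have h2πk : Complex.exp ((φ:ℝ) * Complex.I)
        = Complex.exp ((((x+y)/2 + Real.pi/2 - ρ' : ℝ):ℂ) * Complex.I) := by
      have hsplit : ((φ:ℝ):ℂ) * Complex.I
          = (((x+y)/2 + Real.pi/2 - ρ' : ℝ):ℂ) * Complex.I + (k:ℂ) * (2 * (Real.pi:ℂ) * Complex.I) := by
        rw [hφ]; push_cast; ring
      rw [hsplit, Complex.exp_add, Complex.exp_int_mul_two_pi_mul_I, mul_one]
    rw [h2πk]
    congr 1
    push_cast
    ring
  rw [mul_assoc, hrot]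
  have hsinpos : 0 < 2 * Real.sin ((x-y)/2) := by
    have := Real.sin_pos_of_pos_of_lt_pi hd1 hd2
    linarith
  rw [Complex.arg_real_mul _ hsinpos]
  exact arg_exp_real hk1 hk2

set_option maxHeartbeats 1000000 in
/-- Two disjoint paths in the closed unit disk whose endpoints interleave on the
unit circle cannot exist. -/
lemma disk_paths_cross (γ δ' : ℝ → ℂ) (hγc : Continuous γ) (hδc : Continuous δ')
    (hγb : ∀ t, ‖γ t‖ ≤ 1) (hδb : ∀ t, ‖δ' t‖ ≤ 1)
    (hγl : ∀ t : ℝ, t ≤ 0 → γ t = γ 0) (hγr : ∀ t : ℝ, 1 ≤ t → γ t = γ 1)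
    (hδl : ∀ t : ℝ, t ≤ 0 → δ' t = δ' 0) (hδr : ∀ t : ℝ, 1 ≤ t → δ' t = δ' 1)
    (hdisj : ∀ s t : ℝ, γ s ≠ δ' t)
    (α β c d : ℝ) (h0α : 0 ≤ α) (hαβ : α < β) (hβc : β < c) (hcd : c < d)
    (hd2π : d < 2*Real.pi)
    (hγ0 : γ 0 = Complex.exp ((α:ℝ) * Complex.I)) (hγ1 : γ 1 = Complex.exp ((c:ℝ) * Complex.I))
    (hδ0 : δ' 0 = Complex.exp ((β:ℝ) * Complex.I)) (hδ1 : δ' 1 = Complex.exp ((d:ℝ) * Complex.I)) :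
    False := by
  have hπ := Real.pi_pos
  -- half-angle differences
  set u : ℝ := (β - α)/2 with hu
  set v : ℝ := (c - β)/2 with hv
  set w : ℝ := (d - c)/2 with hw
  set z : ℝ := (d - α)/2 with hz
  have hu0 : 0 < u := by rw [hu]; linarith
  have hv0 : 0 < v := by rw [hv]; linarith
  have hw0 : 0 < w := by rw [hw]; linarith
  have hzuvw : z = u + v + w := by rw [hz, hu, hv, hw]; ring
  have huπ : u < Real.pi := by rw [hu]; linarith
  have hvπ : v < Real.pi := by rw [hv]; linarith
  have hwπ : w < Real.pi := by rw [hw]; linarith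
  have hzπ : z < Real.pi := by rw [hz]; linarith
  have hz0 : 0 < z := by rw [hz]; linarith
  -- shift identities
  have hshift : ∀ x : ℝ, Complex.exp (((x + 2*Real.pi : ℝ) : ℂ) * Complex.I)
      = Complex.exp ((x:ℝ) * Complex.I) := by
    intro x
    have : ((x + 2*Real.pi : ℝ) : ℂ) * Complex.I = (x:ℝ) * Complex.I + 2 * Real.pi * Complex.I := by
      push_cast; ring
    rw [this, Complex.exp_add, Complex.exp_two_pi_mul_I, mul_one]
  have hexpneg : ∀ x : ℝ, Complex.exp (((x + Real.pi : ℝ) : ℂ) * Complex.I)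
      = - Complex.exp ((x:ℝ) * Complex.I) := by
    intro x
    have : ((x + Real.pi : ℝ) : ℂ) * Complex.I = (x:ℝ) * Complex.I + Real.pi * Complex.I := by
      push_cast; ring
    rw [this, Complex.exp_add, Complex.exp_pi_mul_I]
    ring
  -- the clamp and boundary-square parametrization
  set c01 : ℝ → ℝ := fun x => max 0 (min 1 x) with hc01def
  have hc01 : Continuous c01 := continuous_const.max (continuous_const.min continuous_id)
  set sc : ℝ → ℝ := fun t => c01 (min t (3 - t)) with hscdef
  set tc : ℝ → ℝ := fun t => c01 (min (t-1) (4-t)) with htcdef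
  have hscc : Continuous sc := hc01.comp (continuous_id.min (continuous_const.sub continuous_id))
  have htcc : Continuous tc := hc01.comp
    ((continuous_id.sub continuous_const).min (continuous_const.sub continuous_id))
  set A : ℝ → ℝ → ℂ :=
    fun r t => γ ((1-r) * sc t + r * (1/2)) - δ' ((1-r) * tc t + r * (1/2)) with hAdef
  have hA : Continuous (fun p : ℝ × ℝ => A p.1 p.2) := by
    apply Continuous.sub
    · exact hγc.comp (((continuous_const.sub continuous_fst).mul
        (hscc.comp continuous_snd)).add (continuous_fst.mul continuous_const))
    · exact hδc.comp (((continuous_const.sub continuous_fst).mul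
        (htcc.comp continuous_snd)).add (continuous_fst.mul continuous_const))
  have h0 : ∀ r t, A r t ≠ 0 := by
    intro r t
    exact sub_ne_zero.mpr (hdisj _ _)
  have hArc : ∀ r, Continuous (A r) :=
    fun r => hA.comp (continuous_const.prodMk continuous_id)
  -- clamp values at special points
  have hsc0 : sc 0 = 0 := by
    simp only [hscdef, hc01def]
    norm_num
  have hsc1 : sc 1 = 1 := by
    simp only [hscdef, hc01def]
    norm_num
  have hsc2 : sc 2 = 1 := by
    simp only [hscdef, hc01def]
    norm_num
  have hsc3 : sc 3 = 0 := by
    simp only [hscdef, hc01def]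
    norm_num
  have hsc4 : sc 4 = 0 := by
    simp only [hscdef, hc01def]
    norm_num
  have htc0 : tc 0 = 0 := by
    simp only [htcdef, hc01def]
    norm_num
  have htc1 : tc 1 = 0 := by
    simp only [htcdef, hc01def]
    norm_num
  have htc2 : tc 2 = 1 := by
    simp only [htcdef, hc01def]
    norm_num
  have htc3 : tc 3 = 1 := by
    simp only [htcdef, hc01def]
    norm_num
  have htc4 : tc 4 = 0 := by
    simp only [htcdef, hc01def]
    norm_num
  have hloop : ∀ r, A r 0 = A r 4 := by
    intro r
    simp only [hAdef, hsc0, hsc4, htc0, htc4]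
  -- A 0 in simplified form
  have hA0 : ∀ t, A 0 t = γ (sc t) - δ' (tc t) := by
    intro t
    simp only [hAdef]
    norm_num
  -- corner values
  have hA00 : A 0 0 = Complex.exp ((α:ℝ) * Complex.I) - Complex.exp ((β:ℝ) * Complex.I) := by
    rw [hA0, hsc0, htc0, hγ0, hδ0]
  have hA01 : A 0 1 = Complex.exp ((c:ℝ) * Complex.I) - Complex.exp ((β:ℝ) * Complex.I) := by
    rw [hA0, hsc1, htc1, hγ1, hδ0]
  have hA02 : A 0 2 = Complex.exp ((c:ℝ) * Complex.I) - Complex.exp ((d:ℝ) * Complex.I) := by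
    rw [hA0, hsc2, htc2, hγ1, hδ1]
  have hA03 : A 0 3 = Complex.exp ((α:ℝ) * Complex.I) - Complex.exp ((d:ℝ) * Complex.I) := by
    rw [hA0, hsc3, htc3, hγ0, hδ1]
  have hA04 : A 0 4 = Complex.exp ((α:ℝ) * Complex.I) - Complex.exp ((β:ℝ) * Complex.I) := by
    rw [hA0, hsc4, htc4, hγ0, hδ0]
  -- lifts
  obtain ⟨Θ₀, hΘ₀c, hΘ₀⟩ := exists_arg_lift (A 0) (hArc 0) (h0 0) (by norm_num : (0:ℝ) ≤ 4)
  have hA1const : ∀ t, A 1 t = A 1 0 := by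
    intro t
    simp only [hAdef]
    norm_num
  have hΘ₁ : ∀ t ∈ Icc (0:ℝ) 4, A 1 t
      = (‖A 1 t‖ : ℂ) * Complex.exp (((fun _ => Complex.arg (A 1 0)) t : ℝ) * Complex.I) := by
    intro t _
    rw [hA1const t]
    exact (Complex.norm_mul_exp_arg_mul_I (A 1 0)).symm
  have hzero : Θ₀ 4 - Θ₀ 0 = 0 := by
    have := loop_inc_homotopy A hA h0 hloop Θ₀ (fun _ => Complex.arg (A 1 0))
      hΘ₀c continuousOn_const hΘ₀ hΘ₁
    simpa using this
  -- edge avoidance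
  have hmodexp : ∀ x : ℝ, ‖Complex.exp ((x:ℝ) * Complex.I)‖ = 1 := by
    intro x
    exact Complex.norm_exp_ofReal_mul_I x
  have edgeγ : ∀ (X : ℝ) (y : ℝ) (lam : ℝ), 0 ≤ lam →
      γ X - Complex.exp ((y:ℝ) * Complex.I) = (lam:ℂ) * Complex.exp ((y:ℝ) * Complex.I) →
      γ X = Complex.exp ((y:ℝ) * Complex.I) := by
    intro X y lam hlam heq
    have hγX : γ X = ((1+lam : ℝ):ℂ) * Complex.exp ((y:ℝ) * Complex.I) := by
      push_cast
      linear_combination heq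
    have habs : ‖γ X‖ = 1 + lam := by
      rw [hγX, norm_mul, hmodexp, mul_one, Complex.norm_real, Real.norm_eq_abs, abs_of_nonneg (by linarith)]
    have h1 : 1 + lam ≤ 1 := habs ▸ hγb X
    have hlam0 : lam = 0 := le_antisymm (by linarith) hlam
    rw [hγX, hlam0]
    norm_num
  have edgeδ : ∀ (Y : ℝ) (y : ℝ) (lam : ℝ), 0 ≤ lam →
      δ' Y - Complex.exp ((y:ℝ) * Complex.I) = (lam:ℂ) * Complex.exp ((y:ℝ) * Complex.I) →
      δ' Y = Complex.exp ((y:ℝ) * Complex.I) := by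
    intro Y y lam hlam heq
    have hδY : δ' Y = ((1+lam : ℝ):ℂ) * Complex.exp ((y:ℝ) * Complex.I) := by
      push_cast
      linear_combination heq
    have habs : ‖δ' Y‖ = 1 + lam := by
      rw [hδY, norm_mul, hmodexp, mul_one, Complex.norm_real, Real.norm_eq_abs, abs_of_nonneg (by linarith)]
    have h1 : 1 + lam ≤ 1 := habs ▸ hδb Y
    have hlam0 : lam = 0 := le_antisymm (by linarith) hlam
    rw [hδY, hlam0]
    norm_num
  -- tc = 0 on [0,1], sc = 1 on [1,2], tc = 1 on [2,3], sc = 0 on [3,4]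
  have htcE1 : ∀ t ∈ Icc (0:ℝ) 1, tc t = 0 := by
    intro t ht
    simp only [htcdef, hc01def]
    rw [min_eq_left (by linarith [ht.1, ht.2] : t - 1 ≤ 4 - t)]
    rw [min_eq_right (by linarith [ht.2] : t - 1 ≤ 1)]
    rw [max_eq_left (by linarith [ht.2])]
  have hscE2 : ∀ t ∈ Icc (1:ℝ) 2, sc t = 1 := by
    intro t ht
    simp only [hscdef, hc01def]
    rcases le_total t (3 - t) with h | h
    · rw [min_eq_left h, min_eq_left (by linarith [ht.1]), max_eq_right (by norm_num)]
    · rw [min_eq_right h, min_eq_left (by linarith [ht.2]), max_eq_right (by norm_num)]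
  have htcE3 : ∀ t ∈ Icc (2:ℝ) 3, tc t = 1 := by
    intro t ht
    simp only [htcdef, hc01def]
    rcases le_total (t-1) (4-t) with h | h
    · rw [min_eq_left h, min_eq_left (by linarith [ht.1]), max_eq_right (by norm_num)]
    · rw [min_eq_right h, min_eq_left (by linarith [ht.2]), max_eq_right (by norm_num)]
  have hscE4 : ∀ t ∈ Icc (3:ℝ) 4, sc t = 0 := by
    intro t ht
    simp only [hscdef, hc01def]
    rw [min_eq_right (by linarith [ht.1] : 3 - t ≤ t)]
    rw [min_eq_right (by linarith [ht.1] : 3 - t ≤ 1)]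
    rw [max_eq_left (by linarith [ht.1])]
  -- avoidance of rays on the four edges
  have havoid1 : ∀ t ∈ Icc (0:ℝ) 1, ∀ lam : ℝ, 0 ≤ lam →
      A 0 t ≠ (lam : ℂ) * Complex.exp ((β:ℝ) * Complex.I) := by
    intro t ht lam hlam heq
    rw [hA0, htcE1 t ht, hδ0] at heq
    exact hdisj (sc t) 0 ((edgeγ _ _ _ hlam heq).trans hδ0.symm)
  have havoid2 : ∀ t ∈ Icc (1:ℝ) 2, ∀ lam : ℝ, 0 ≤ lam →
      A 0 t ≠ (lam : ℂ) * Complex.exp (((c + Real.pi : ℝ):ℝ) * Complex.I) := by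
    intro t ht lam hlam heq
    rw [hA0, hscE2 t ht, hγ1, hexpneg c] at heq
    have heq2 : δ' (tc t) - Complex.exp ((c:ℝ) * Complex.I)
        = (lam:ℂ) * Complex.exp ((c:ℝ) * Complex.I) := by
      linear_combination -heq
    exact hdisj 1 (tc t) (hγ1.trans (edgeδ _ _ _ hlam heq2).symm)
  have havoid3 : ∀ t ∈ Icc (2:ℝ) 3, ∀ lam : ℝ, 0 ≤ lam →
      A 0 t ≠ (lam : ℂ) * Complex.exp ((d:ℝ) * Complex.I) := by
    intro t ht lam hlam heq
    rw [hA0, htcE3 t ht, hδ1] at heq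
    exact hdisj (sc t) 1 ((edgeγ _ _ _ hlam heq).trans hδ1.symm)
  have havoid4 : ∀ t ∈ Icc (3:ℝ) 4, ∀ lam : ℝ, 0 ≤ lam →
      A 0 t ≠ (lam : ℂ) * Complex.exp (((α + Real.pi : ℝ):ℝ) * Complex.I) := by
    intro t ht lam hlam heq
    rw [hA0, hscE4 t ht, hγ0, hexpneg α] at heq
    have heq2 : δ' (tc t) - Complex.exp ((α:ℝ) * Complex.I)
        = (lam:ℂ) * Complex.exp ((α:ℝ) * Complex.I) := by
      linear_combination -heq
    exact hdisj 0 (tc t) (hγ0.trans (edgeδ _ _ _ hlam heq2).symm)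
  -- lift increments along the four edges
  have hsub : ∀ (p q : ℝ), (0:ℝ) ≤ p → q ≤ 4 → Icc p q ⊆ Icc (0:ℝ) 4 :=
    fun p q hp hq => Icc_subset_Icc hp hq
  have hΔ1 := lift_inc_of_avoid (A 0) (by norm_num : (0:ℝ) ≤ 1) (hArc 0) havoid1
    Θ₀ (hΘ₀c.mono (hsub 0 1 le_rfl (by norm_num)))
    (fun t ht => hΘ₀ t (hsub 0 1 le_rfl (by norm_num) ht))
  have hΔ2 := lift_inc_of_avoid (A 0) (by norm_num : (1:ℝ) ≤ 2) (hArc 0) havoid2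
    Θ₀ (hΘ₀c.mono (hsub 1 2 (by norm_num) (by norm_num)))
    (fun t ht => hΘ₀ t (hsub 1 2 (by norm_num) (by norm_num) ht))
  have hΔ3 := lift_inc_of_avoid (A 0) (by norm_num : (2:ℝ) ≤ 3) (hArc 0) havoid3
    Θ₀ (hΘ₀c.mono (hsub 2 3 (by norm_num) (by norm_num)))
    (fun t ht => hΘ₀ t (hsub 2 3 (by norm_num) (by norm_num) ht))
  have hΔ4 := lift_inc_of_avoid (A 0) (by norm_num : (3:ℝ) ≤ 4) (hArc 0) havoid4
    Θ₀ (hΘ₀c.mono (hsub 3 4 (by norm_num) (by norm_num)))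
    (fun t ht => hΘ₀ t (hsub 3 4 (by norm_num) (by norm_num) ht))
  -- the eight arg computations
  have e1b : Complex.arg (A 0 1 * Complex.exp (-((β + Real.pi : ℝ) : ℂ) * Complex.I))
      = (c+β)/2 + Real.pi/2 - (β + Real.pi) + 2*Real.pi*(0:ℤ) := by
    rw [hA01]
    exact arg_chord_rot c β (β + Real.pi) (by linarith) (by linarith) 0
      (by push_cast; linarith) (by push_cast; linarith)
  have e1a : Complex.arg (A 0 0 * Complex.exp (-((β + Real.pi : ℝ) : ℂ) * Complex.I))
      = ((α + 2*Real.pi)+β)/2 + Real.pi/2 - (β + Real.pi) + 2*Real.pi*(0:ℤ) := by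
    rw [hA00, ← hshift α]
    exact arg_chord_rot (α + 2*Real.pi) β (β + Real.pi) (by linarith) (by linarith) 0
      (by push_cast; linarith) (by push_cast; linarith)
  have e2a : Complex.arg (A 0 1 * Complex.exp (-((c + Real.pi + Real.pi : ℝ) : ℂ) * Complex.I))
      = (c+β)/2 + Real.pi/2 - (c + Real.pi + Real.pi) + 2*Real.pi*(1:ℤ) := by
    rw [hA01]
    exact arg_chord_rot c β (c + Real.pi + Real.pi) (by linarith) (by linarith) 1
      (by push_cast; linarith) (by push_cast; linarith)
  have e2b : Complex.arg (A 0 2 * Complex.exp (-((c + Real.pi + Real.pi : ℝ) : ℂ) * Complex.I))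
      = ((c + 2*Real.pi)+d)/2 + Real.pi/2 - (c + Real.pi + Real.pi) + 2*Real.pi*(0:ℤ) := by
    rw [hA02, ← hshift c]
    exact arg_chord_rot (c + 2*Real.pi) d (c + Real.pi + Real.pi) (by linarith) (by linarith) 0
      (by push_cast; linarith) (by push_cast; linarith)
  have e3a : Complex.arg (A 0 2 * Complex.exp (-((d + Real.pi : ℝ) : ℂ) * Complex.I))
      = ((c + 2*Real.pi)+d)/2 + Real.pi/2 - (d + Real.pi) + 2*Real.pi*(0:ℤ) := by
    rw [hA02, ← hshift c]
    exact arg_chord_rot (c + 2*Real.pi) d (d + Real.pi) (by linarith) (by linarith) 0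
      (by push_cast; linarith) (by push_cast; linarith)
  have e3b : Complex.arg (A 0 3 * Complex.exp (-((d + Real.pi : ℝ) : ℂ) * Complex.I))
      = ((α + 2*Real.pi)+d)/2 + Real.pi/2 - (d + Real.pi) + 2*Real.pi*(0:ℤ) := by
    rw [hA03, ← hshift α]
    exact arg_chord_rot (α + 2*Real.pi) d (d + Real.pi) (by linarith) (by linarith) 0
      (by push_cast; linarith) (by push_cast; linarith)
  have e4a : Complex.arg (A 0 3 * Complex.exp (-((α + Real.pi + Real.pi : ℝ) : ℂ) * Complex.I))
      = ((α + 2*Real.pi)+d)/2 + Real.pi/2 - (α + Real.pi + Real.pi) + 2*Real.pi*(0:ℤ) := by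
    rw [hA03, ← hshift α]
    exact arg_chord_rot (α + 2*Real.pi) d (α + Real.pi + Real.pi) (by linarith) (by linarith) 0
      (by push_cast; linarith) (by push_cast; linarith)
  have e4b : Complex.arg (A 0 4 * Complex.exp (-((α + Real.pi + Real.pi : ℝ) : ℂ) * Complex.I))
      = ((α + 2*Real.pi)+β)/2 + Real.pi/2 - (α + Real.pi + Real.pi) + 2*Real.pi*(0:ℤ) := by
    rw [hA04, ← hshift α]
    exact arg_chord_rot (α + 2*Real.pi) β (α + Real.pi + Real.pi) (by linarith) (by linarith) 0
      (by push_cast; linarith) (by push_cast; linarith)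
  -- combine
  rw [e1a, e1b] at hΔ1
  rw [e2a, e2b] at hΔ2
  rw [e3a, e3b] at hΔ3
  rw [e4a, e4b] at hΔ4
  push_cast at hΔ1 hΔ2 hΔ3 hΔ4
  linarith

lemma exists_path_of_walk {V : Type*} (G : SimpleGraph V) (pos : V → ℂ)
    (arc : ∀ {u v : V}, G.Adj u v → Path (pos u) (pos v))
    (W : Set V) :
    ∀ {x y : ↥W}, (G.induce W).Walk x y →
      ∃ p : Path (pos x.1) (pos y.1), Set.range p ⊆
        {z | ∃ u v, ∃ h : G.Adj u v, u ∈ W ∧ v ∈ W ∧ z ∈ Set.range (arc h)} ∪ pos '' W := by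
  intro x y wk
  induction wk with
  | @nil u =>
    refine ⟨Path.refl _, ?_⟩
    rw [Path.refl_range]
    intro z hz
    right
    rw [mem_singleton_iff] at hz
    exact ⟨u.1, u.2, hz.symm⟩
  | @cons x' y' z' h' wtail ih =>
    obtain ⟨p', hp'⟩ := ih
    have hadj : G.Adj x'.1 y'.1 := by simpa using h'
    refine ⟨(arc hadj).trans p', ?_⟩
    rw [Path.trans_range]
    apply union_subset
    · intro z hz
      left
      exact ⟨x'.1, y'.1, hadj, x'.2, y'.2, hz⟩
    · exact hp'

/-- Noncrossing property of connected pieces in a disk embedding: let `G` be a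
graph drawn in the closed unit disk (vertices are distinct points of the disk,
each edge is drawn as an injective arc in the disk whose interior avoids the
other vertices, and arcs of distinct edges meet only at positions of common
endpoints).  Suppose boundary vertices `bd 0, …, bd (m-1)` lie on the unit
circle in this cyclic order (at strictly increasing angles in `[0, 2π)`).  If
`S` and `T` are disjoint vertex sets, each inducing a connected subgraph of
`G`, then for indices `a < b < c < d` it is impossible that
`bd a, bd c ∈ S` and `bd b, bd d ∈ T`. -/
theorem disk_embedding_noncrossing {V : Type*} (G : SimpleGraph V)
    (pos : V → ℂ) (hinj : Function.Injective pos)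
    (hball : ∀ v, pos v ∈ Metric.closedBall (0 : ℂ) 1)
    (arc : ∀ {u v : V}, G.Adj u v → Path (pos u) (pos v))
    (harcball : ∀ {u v : V} (h : G.Adj u v),
      Set.range (arc h) ⊆ Metric.closedBall (0 : ℂ) 1)
    (harcinj : ∀ {u v : V} (h : G.Adj u v), Function.Injective (arc h))
    (harcvert : ∀ {u v : V} (h : G.Adj u v), ∀ x : V,
      pos x ∈ Set.range (arc h) → x = u ∨ x = v)
    (hnocross : ∀ {u v u' v' : V} (h : G.Adj u v) (h' : G.Adj u' v'),
      s(u, v) ≠ s(u', v') →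
      Set.range (arc h) ∩ Set.range (arc h') ⊆
        pos '' (({u, v} : Set V) ∩ ({u', v'} : Set V)))
    (m : ℕ) (bd : Fin m → V) (hbdinj : Function.Injective bd)
    (θ : Fin m → ℝ) (hθmono : StrictMono θ)
    (hθrange : ∀ i, θ i ∈ Set.Ico 0 (2 * Real.pi))
    (hcirc : ∀ i, pos (bd i) = Complex.exp (θ i * Complex.I))
    (S T : Set V) (hST : Disjoint S T)
    (hS : (G.induce S).Connected) (hT : (G.induce T).Connected)
    (a b c d : Fin m) (hab : a < b) (hbc : b < c) (hcd : c < d) :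
    ¬ (bd a ∈ S ∧ bd c ∈ S ∧ bd b ∈ T ∧ bd d ∈ T) := by
  rintro ⟨hAS, hCS, hBT, hDT⟩
  -- graph walks inside S and T
  obtain ⟨wS⟩ := hS.preconnected ⟨bd a, hAS⟩ ⟨bd c, hCS⟩
  obtain ⟨wT⟩ := hT.preconnected ⟨bd b, hBT⟩ ⟨bd d, hDT⟩
  obtain ⟨pS, hpS⟩ := exists_path_of_walk G pos @arc S wS
  obtain ⟨pT, hpT⟩ := exists_path_of_walk G pos @arc T wT
  set PS : Set ℂ :=
    {z | ∃ u v, ∃ h : G.Adj u v, u ∈ S ∧ v ∈ S ∧ z ∈ Set.range (arc h)} ∪ pos '' S with hPS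
  set PT : Set ℂ :=
    {z | ∃ u v, ∃ h : G.Adj u v, u ∈ T ∧ v ∈ T ∧ z ∈ Set.range (arc h)} ∪ pos '' T with hPT
  -- PS and PT are disjoint
  have hST' : ∀ x : V, x ∈ S → x ∈ T → False :=
    fun x hx hx' => Set.disjoint_left.mp hST hx hx'
  have hsep : ∀ zs ∈ PS, ∀ zt ∈ PT, zs ≠ zt := by
    rintro zs (⟨u, v, h, huS, hvS, hzs⟩ | ⟨xs, hxsS, rfl⟩)
      zt (⟨u', v', h', hu'T, hv'T, hzt⟩ | ⟨xt, hxtT, rfl⟩) heq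
    · -- edge-edge
      subst heq
      have hne : s(u, v) ≠ s(u', v') := by
        intro hsym
        rw [Sym2.eq_iff] at hsym
        rcases hsym with ⟨rfl, rfl⟩ | ⟨rfl, rfl⟩
        · exact hST' u huS hu'T
        · exact hST' u huS hv'T
      obtain ⟨x, ⟨hx1, hx2⟩, hxz⟩ := hnocross h h' hne ⟨hzs, hzt⟩
      have hxS : x ∈ S := by
        rcases hx1 with rfl | hx1
        · exact huS
        · rw [Set.mem_singleton_iff] at hx1; subst hx1; exact hvS
      have hxT : x ∈ T := by
        rcases hx2 with rfl | hx2
        · exact hu'T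
        · rw [Set.mem_singleton_iff] at hx2; subst hx2; exact hv'T
      exact hST' x hxS hxT
    · -- edge-vertex
      have hmem : pos xt ∈ Set.range (arc h) := heq ▸ hzs
      rcases harcvert h xt hmem with rfl | rfl
      · exact hST' xt huS hxtT
      · exact hST' xt hvS hxtT
    · -- vertex-edge
      have hmem : pos xs ∈ Set.range (arc h') := heq ▸ hzt
      rcases harcvert h' xs hmem with rfl | rfl
      · exact hST' xs hxsS hu'T
      · exact hST' xs hxsS hv'T
    · -- vertex-vertex
      have := hinj heq
      subst this
      exact hST' xs hxsS hxtT
  -- bound within the disk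
  have hPSball : ∀ z ∈ PS, ‖z‖ ≤ 1 := by
    rintro z (⟨u, v, h, _, _, hz⟩ | ⟨x, _, rfl⟩)
    · have := harcball h hz
      rwa [Metric.mem_closedBall, Complex.dist_eq, sub_zero] at this
    · have := hball x
      rwa [Metric.mem_closedBall, Complex.dist_eq, sub_zero] at this
  have hPTball : ∀ z ∈ PT, ‖z‖ ≤ 1 := by
    rintro z (⟨u, v, h, _, _, hz⟩ | ⟨x, _, rfl⟩)
    · have := harcball h hz
      rwa [Metric.mem_closedBall, Complex.dist_eq, sub_zero] at this
    · have := hball x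
      rwa [Metric.mem_closedBall, Complex.dist_eq, sub_zero] at this
  -- extend the paths to ℝ
  set γ : ℝ → ℂ := Set.IccExtend zero_le_one ⇑pS with hγdef
  set δ' : ℝ → ℂ := Set.IccExtend zero_le_one ⇑pT with hδdef
  have hγc : Continuous γ := pS.continuous.Icc_extend'
  have hδc : Continuous δ' := pT.continuous.Icc_extend'
  have hγmem : ∀ t, γ t ∈ PS := by
    intro t
    apply hpS
    rw [hγdef, ← Set.IccExtend_range zero_le_one ⇑pS]
    exact Set.mem_range_self t
  have hδmem : ∀ t, δ' t ∈ PT := by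
    intro t
    apply hpT
    rw [hδdef, ← Set.IccExtend_range zero_le_one ⇑pT]
    exact Set.mem_range_self t
  have hγl : ∀ t : ℝ, t ≤ 0 → γ t = γ 0 := by
    intro t ht
    rw [hγdef]
    rw [Set.IccExtend_of_le_left zero_le_one ⇑pS ht,
      Set.IccExtend_of_le_left zero_le_one ⇑pS le_rfl]
  have hγr : ∀ t : ℝ, 1 ≤ t → γ t = γ 1 := by
    intro t ht
    rw [hγdef]
    rw [Set.IccExtend_of_right_le zero_le_one ⇑pS ht,
      Set.IccExtend_of_right_le zero_le_one ⇑pS le_rfl]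
  have hδl : ∀ t : ℝ, t ≤ 0 → δ' t = δ' 0 := by
    intro t ht
    rw [hδdef]
    rw [Set.IccExtend_of_le_left zero_le_one ⇑pT ht,
      Set.IccExtend_of_le_left zero_le_one ⇑pT le_rfl]
  have hδr : ∀ t : ℝ, 1 ≤ t → δ' t = δ' 1 := by
    intro t ht
    rw [hδdef]
    rw [Set.IccExtend_of_right_le zero_le_one ⇑pT ht,
      Set.IccExtend_of_right_le zero_le_one ⇑pT le_rfl]
  -- endpoint values
  have hγ0 : γ 0 = Complex.exp ((θ a : ℝ) * Complex.I) := by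
    rw [hγdef, Set.IccExtend_of_le_left zero_le_one ⇑pS le_rfl]
    rw [← hcirc a]
    exact pS.source
  have hγ1 : γ 1 = Complex.exp ((θ c : ℝ) * Complex.I) := by
    rw [hγdef, Set.IccExtend_of_right_le zero_le_one ⇑pS le_rfl]
    rw [← hcirc c]
    exact pS.target
  have hδ0 : δ' 0 = Complex.exp ((θ b : ℝ) * Complex.I) := by
    rw [hδdef, Set.IccExtend_of_le_left zero_le_one ⇑pT le_rfl]
    rw [← hcirc b]
    exact pT.source
  have hδ1 : δ' 1 = Complex.exp ((θ d : ℝ) * Complex.I) := by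
    rw [hδdef, Set.IccExtend_of_right_le zero_le_one ⇑pT le_rfl]
    rw [← hcirc d]
    exact pT.target
  exact disk_paths_cross γ δ' hγc hδc (fun t => hPSball _ (hγmem t)) (fun t => hPTball _ (hδmem t))
    hγl hγr hδl hδr (fun s t => hsep _ (hγmem s) _ (hδmem t))
    (θ a) (θ b) (θ c) (θ d) (hθrange a).1 (hθmono hab) (hθmono hbc) (hθmono hcd)
    (hθrange d).2 hγ0 hγ1 hδ0 hδ1
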